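/- Let 𝒰_▷ := {{(−1,1),(−1,−1)}, {(0,1),(1,1)}, {(0,−1),(1,−1)}} and y = −e₁ ∈ 𝒮(𝒰_▷). For n ≥ 1, let Y = {(0,j) : 0 ≤ j ≤ 2n} (a segment of L = 2n+1 consecutive points of l_y) and let η ∈ {+,−}^Y be the configuration with η⁺ = {(0,2k) : 0 ≤ k ≤ n}. Then Σ_{u∈η⁻} r_u(η) = n while Σ_{v∈η⁺} r_v(η) = 2n; in particular the inequality Σ_{v∈η⁺} r_v(η) ≤ Σ_{u∈η⁻} r_u(η) fails for this configuration. -/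

import Mathlib

open scoped BigOperators

/-- Points of the plane lattice ℤ². -/
abbrev Pt : Type := ℤ × ℤ

noncomputable section

/-- Inner product of an integer point with a real vector. -/
def dotIR (x : Pt) (u : ℝ × ℝ) : ℝ := (x.1 : ℝ) * u.1 + (x.2 : ℝ) * u.2

/-- Inner product of two real vectors. -/
def dotRR (u v : ℝ × ℝ) : ℝ := u.1 * v.1 + u.2 * v.2

/-- The unit circle S¹ ⊆ ℝ². -/
def unitCircle : Set (ℝ × ℝ) := {u | u.1 ^ 2 + u.2 ^ 2 = 1}

/-- The discrete half-plane H_u = {x ∈ ℤ² : ⟨x,u⟩ < 0}. -/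
def halfPlane (u : ℝ × ℝ) : Set Pt := {x | dotIR x u < 0}

/-- An update family: a finite nonempty family of finite subsets of ℤ²∖{0}. -/
def UpdateFamily (𝒰 : Finset (Finset Pt)) : Prop :=
  𝒰.Nonempty ∧ ∀ X ∈ 𝒰, (0 : Pt) ∉ X

/-- One step of 𝒰-bootstrap percolation. -/
def bootStep (𝒰 : Finset (Finset Pt)) (A : Set Pt) : Set Pt :=
  A ∪ {x : Pt | ∃ X ∈ 𝒰, ∀ v ∈ X, x + v ∈ A}

/-- Iterates of 𝒰-bootstrap percolation. -/
def bootIter (𝒰 : Finset (Finset Pt)) : ℕ → Set Pt → Set Pt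
  | 0, A => A
  | n + 1, A => bootStep 𝒰 (bootIter 𝒰 n A)

/-- The 𝒰-bootstrap closure [A] = ⋃_t A_t. -/
def bootClosure (𝒰 : Finset (Finset Pt)) (A : Set Pt) : Set Pt :=
  ⋃ n : ℕ, bootIter 𝒰 n A

/-- The stable set 𝒮(𝒰) = {u ∈ S¹ : X ⊄ H_u for all X ∈ 𝒰}. -/
def stableSet (𝒰 : Finset (Finset Pt)) : Set (ℝ × ℝ) :=
  {u | u ∈ unitCircle ∧ ∀ X ∈ 𝒰, ¬((X : Set Pt) ⊆ halfPlane u)}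

/-- A rational direction: u = z/‖z‖ for some z ∈ ℤ²∖{0}. -/
def IsRationalDir (u : ℝ × ℝ) : Prop :=
  ∃ z : Pt, z ≠ 0 ∧
    u = ((z.1 : ℝ) / Real.sqrt ((z.1 : ℝ) ^ 2 + (z.2 : ℝ) ^ 2),
         (z.2 : ℝ) / Real.sqrt ((z.1 : ℝ) ^ 2 + (z.2 : ℝ) ^ 2))

/-- Critical family: some (closed) semicircle meets 𝒮(𝒰) in a finite set and every open
semicircle meets 𝒮(𝒰). -/
def Critical (𝒰 : Finset (Finset Pt)) : Prop :=
  (∃ u ∈ unitCircle, (stableSet 𝒰 ∩ {w | 0 ≤ dotRR u w}).Finite) ∧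
  ∀ u ∈ unitCircle, (stableSet 𝒰 ∩ {w | 0 < dotRR u w}).Nonempty

/-- Supercritical family: some open semicircle is disjoint from 𝒮(𝒰). -/
def Supercritical (𝒰 : Finset (Finset Pt)) : Prop :=
  ∃ u ∈ unitCircle, stableSet 𝒰 ∩ {w | 0 < dotRR u w} = ∅

/-- Subcritical family: every semicircle has infinite intersection with 𝒮(𝒰). -/
def Subcritical (𝒰 : Finset (Finset Pt)) : Prop :=
  ∀ u ∈ unitCircle, (stableSet 𝒰 ∩ {w | 0 ≤ dotRR u w}).Infinite

/-- The translated half-plane H_u + a. -/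
def translHalfPlane (u : ℝ × ℝ) (a : Pt) : Set Pt := {x | dotIR (x - a) u < 0}

/-- A 𝒯-droplet: a nonempty intersection ⋂_{u ∈ 𝒯} (H_u + a_u). -/
def IsDroplet (𝒯 : Finset (ℝ × ℝ)) (D : Set Pt) : Prop :=
  D.Nonempty ∧ ∃ a : (ℝ × ℝ) → Pt, D = ⋂ u ∈ 𝒯, translHalfPlane u (a u)

/-- Euclidean distance between two lattice points. -/
def edist2 (x y : Pt) : ℝ :=
  Real.sqrt (((x.1 : ℝ) - (y.1 : ℝ)) ^ 2 + ((x.2 : ℝ) - (y.2 : ℝ)) ^ 2)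

/-- Diameter of a set of lattice points (w.r.t. the Euclidean distance). -/
def diam (D : Set Pt) : ℝ :=
  sSup {d : ℝ | ∃ x ∈ D, ∃ y ∈ D, d = edist2 x y}

/-- Translate of a set of lattice points. -/
def translatePt (a : Pt) (D : Set Pt) : Set Pt := (fun x => a + x) '' D

/-- The initial collection of the covering algorithm: one copy of D̂ per element of A. -/
def initColl (Dhat : Set Pt) (A : Finset Pt) : Multiset (Set Pt) :=
  A.val.map (fun a => translatePt a Dhat)

/-- Two sets lie within Euclidean distance κ of each other. -/
def DropletsClose (κ : ℝ) (D E : Set Pt) : Prop :=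
  ∃ x ∈ D, ∃ y ∈ E, edist2 x y ≤ κ

/-- D is the smallest 𝒯-droplet containing S. -/
def SmallestDroplet (𝒯 : Finset (ℝ × ℝ)) (S : Set Pt) (D : Set Pt) : Prop :=
  IsDroplet 𝒯 D ∧ S ⊆ D ∧ ∀ D' : Set Pt, IsDroplet 𝒯 D' → S ⊆ D' → D ⊆ D'

/-- One merging step of the covering algorithm. -/
def MergeStep (κ : ℝ) (𝒯 : Finset (ℝ × ℝ)) (C C' : Multiset (Set Pt)) : Prop :=
  ∃ (D₁ D₂ D₃ : Set Pt) (C₀ : Multiset (Set Pt)),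
    C = D₁ ::ₘ D₂ ::ₘ C₀ ∧ DropletsClose κ D₁ D₂ ∧
    SmallestDroplet 𝒯 (D₁ ∪ D₂) D₃ ∧ C' = D₃ ::ₘ C₀

/-- A terminal collection: all pairwise distances exceed κ. -/
def TerminalColl (κ : ℝ) (C : Multiset (Set Pt)) : Prop :=
  ∀ (D₁ D₂ : Set Pt) (C₀ : Multiset (Set Pt)),
    C = D₁ ::ₘ D₂ ::ₘ C₀ → ¬ DropletsClose κ D₁ D₂

/-- D̂ is a valid base droplet for the covering algorithm with parameter κ:
a finite 𝒯-droplet containing 0 with κ/2 ≤ diam(D̂) ≤ κ. -/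
def GoodBase (κ : ℝ) (𝒯 : Finset (ℝ × ℝ)) (Dhat : Set Pt) : Prop :=
  IsDroplet 𝒯 Dhat ∧ Dhat.Finite ∧ (0 : Pt) ∈ Dhat ∧ κ / 2 ≤ diam Dhat ∧ diam Dhat ≤ κ

/-- The collection C is reachable by the covering algorithm started from A. -/
def Reachable (κ : ℝ) (𝒯 : Finset (ℝ × ℝ)) (Dhat : Set Pt) (A : Finset Pt)
    (C : Multiset (Set Pt)) : Prop :=
  Relation.ReflTransGen (MergeStep κ 𝒯) (initColl Dhat A) C

/-- A droplet is covered by A if it belongs to some collection arising during some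
execution of the covering algorithm. -/
def CoveredBy (κ : ℝ) (𝒯 : Finset (ℝ × ℝ)) (Dhat : Set Pt) (A : Finset Pt)
    (D : Set Pt) : Prop :=
  ∃ C : Multiset (Set Pt), Reachable κ 𝒯 Dhat A C ∧ D ∈ C

/-- The lattice line l_y = {x ∈ ℤ² : ⟨x,y⟩ = 0}. -/
def lineLat (y : ℝ × ℝ) : Set Pt := {x | dotIR x y = 0}

/-- w generates the rank-one lattice l_y. -/
def GeneratesLine (w : Pt) (y : ℝ × ℝ) : Prop :=
  lineLat y = Set.range (fun k : ℤ => ((k * w.1, k * w.2) : Pt))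

/-- The segment Y = {z₀ + j·w : 0 ≤ j < L} of L consecutive points of l_y. -/
def segmentY (z₀ w : Pt) (L : ℕ) : Finset Pt :=
  (Finset.range L).image (fun j : ℕ => ((z₀.1 + (j : ℤ) * w.1, z₀.2 + (j : ℤ) * w.2) : Pt))

open Classical in
/-- The configuration of ℤ² determined by η ∈ {+,−}^Y: state − (false) on H_y, the values of η
on Y, and + (true) elsewhere. -/
def sigmaCfg (y : ℝ × ℝ) (Y : Finset Pt) (η : Pt → Bool) (x : Pt) : Bool :=
  if x ∈ halfPlane y then false else if x ∈ Y then η x else true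

/-- r_v(η): the number of rules X ∈ 𝒰 such that every point of v + X has state opposite
to that of v (in the configuration σ_η). -/
def rval (𝒰 : Finset (Finset Pt)) (y : ℝ × ℝ) (Y : Finset Pt) (η : Pt → Bool) (v : Pt) : ℕ :=
  {X : Finset Pt | X ∈ 𝒰 ∧ ∀ p ∈ X, sigmaCfg y Y η (v + p) = !(sigmaCfg y Y η v)}.ncard

/-- η with the state at v flipped. -/
def flipAt (η : Pt → Bool) (v : Pt) : Pt → Bool := fun x => if x = v then !(η x) else η x

/-- The generator 𝕍 of the restricted 1-dimensional 𝒰-voter dynamics on Y. -/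
def genV (𝒰 : Finset (Finset Pt)) (y : ℝ × ℝ) (Y : Finset Pt)
    (g : (Pt → Bool) → ℝ) (η : Pt → Bool) : ℝ :=
  ∑ v ∈ Y, ((rval 𝒰 y Y η v : ℝ) / (𝒰.card : ℝ)) * (g (flipAt η v) - g η)

/-- The natural projection ℤ² → ℤ²_n. -/
def torusProj (n : ℕ) (v : Pt) : ZMod n × ZMod n := ((v.1 : ZMod n), (v.2 : ZMod n))

/-- One step of 𝒰-bootstrap percolation on the torus ℤ²_n. -/
def torusStep (n : ℕ) (𝒰 : Finset (Finset Pt)) (A : Set (ZMod n × ZMod n)) :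
    Set (ZMod n × ZMod n) :=
  A ∪ {x | ∃ X ∈ 𝒰, ∀ v ∈ X, x + torusProj n v ∈ A}

/-- Iterates of 𝒰-bootstrap percolation on the torus. -/
def torusIter (n : ℕ) (𝒰 : Finset (Finset Pt)) :
    ℕ → Set (ZMod n × ZMod n) → Set (ZMod n × ZMod n)
  | 0, A => A
  | t + 1, A => torusStep n 𝒰 (torusIter n 𝒰 t A)

/-- The 𝒰-bootstrap closure on the torus. -/
def torusClosure (n : ℕ) (𝒰 : Finset (Finset Pt)) (A : Set (ZMod n × ZMod n)) :
    Set (ZMod n × ZMod n) :=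
  ⋃ t : ℕ, torusIter n 𝒰 t A

open Classical in
/-- ℙ_p([A] = ℤ²_n) for a p-random subset A of ℤ²_n (Bernoulli product measure written as
a finite sum over configurations). -/
def percProb (n : ℕ) (𝒰 : Finset (Finset Pt)) (p : ℝ) : ℝ :=
  if h : n = 0 then 0 else
    haveI : NeZero n := ⟨h⟩
    ∑ ω : ZMod n × ZMod n → Bool,
      (if torusClosure n 𝒰 {x | ω x = true} = Set.univ then (1 : ℝ) else 0) *
        p ^ (Finset.univ.filter (fun x => ω x = true)).card *
        (1 - p) ^ (Finset.univ.filter (fun x => ω x = false)).card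

/-- The critical probability p_c(ℤ²_n, 𝒰). -/
def pCrit (n : ℕ) (𝒰 : Finset (Finset Pt)) : ℝ :=
  sInf {p : ℝ | p ∈ Set.Icc (0 : ℝ) 1 ∧ 1 / 2 ≤ percProb n 𝒰 p}

/-- The point of S¹ at angle θ. -/
def circlePt (θ : ℝ) : ℝ × ℝ := (Real.cos θ, Real.sin θ)

end

/-- The family 𝒰_▷. -/
def Utri : Finset (Finset Pt) :=
  {({(-1, 1), (-1, -1)} : Finset Pt), ({(0, 1), (1, 1)} : Finset Pt),
    ({(0, -1), (1, -1)} : Finset Pt)}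

section Stmt16Aux

/-- The alternating configuration. -/
private def etaAlt : Pt → Bool := fun x => decide (x.2 % 2 = 0)

private lemma segY_eq (n : ℕ) :
    segmentY (0,0) (0,1) (2*n+1)
      = (Finset.range (2*n+1)).image (fun j : ℕ => (((0:ℤ), (j:ℤ)) : Pt)) := by
  unfold segmentY
  apply Finset.image_congr
  intro j _
  simp

private lemma memY (n : ℕ) (x : Pt) :
    x ∈ segmentY (0,0) (0,1) (2*n+1) ↔ x.1 = 0 ∧ 0 ≤ x.2 ∧ x.2 ≤ 2*n := by
  obtain ⟨a, b⟩ := x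
  rw [segY_eq]
  simp only [Finset.mem_image, Finset.mem_range, Prod.mk.injEq]
  constructor
  · rintro ⟨j, hj, rfl, rfl⟩
    refine ⟨rfl, by omega, by omega⟩
  · rintro ⟨rfl, h2, h3⟩
    exact ⟨b.toNat, by omega, rfl, by omega⟩

private lemma sigma_eval (n : ℕ) (x : Pt) :
    sigmaCfg (-1,0) (segmentY (0,0) (0,1) (2*n+1)) etaAlt x
      = if 0 < x.1 then false
        else if x.1 = 0 ∧ 0 ≤ x.2 ∧ x.2 ≤ 2*n then decide (x.2 % 2 = 0) else true := by
  have hhp : x ∈ halfPlane (-1,0) ↔ 0 < x.1 := by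
    have : dotIR x (-1,0) = -(x.1 : ℝ) := by simp [dotIR]
    rw [halfPlane, Set.mem_setOf_eq, this, neg_lt_zero, Int.cast_pos]
  unfold sigmaCfg
  by_cases h1 : 0 < x.1
  · rw [if_pos (hhp.mpr h1), if_pos h1]
  · rw [if_neg (fun hc => h1 (hhp.mp hc)), if_neg h1]
    by_cases h2 : x.1 = 0 ∧ 0 ≤ x.2 ∧ x.2 ≤ 2*n
    · rw [if_pos ((memY n x).mpr h2), if_pos h2]
      rfl
    · rw [if_neg (fun hc => h2 ((memY n x).mp hc)), if_neg h2]

private lemma rval_eq (𝒰 : Finset (Finset Pt)) (y : ℝ × ℝ) (Y : Finset Pt) (η : Pt → Bool)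
    (v : Pt) :
    rval 𝒰 y Y η v
      = (𝒰.filter (fun X => ∀ p ∈ X, sigmaCfg y Y η (v+p) = !(sigmaCfg y Y η v))).card := by
  classical
  rw [rval, ← Set.ncard_coe_finset]
  congr 1
  ext X
  simp

private lemma rval_val (n j : ℕ) (hj : j ≤ 2*n) :
    rval Utri (-1,0) (segmentY (0,0) (0,1) (2*n+1)) etaAlt (((0:ℤ), (j:ℤ)) : Pt)
      = if j % 2 = 0 then ((if 0 < j then 1 else 0) + (if j < 2*n then 1 else 0)) else 1 := by
  classical
  rw [rval_eq]
  have hσv : sigmaCfg (-1,0) (segmentY (0,0) (0,1) (2*n+1)) etaAlt (((0:ℤ),(j:ℤ)) : Pt)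
      = decide (j % 2 = 0) := by
    rw [sigma_eval n, if_neg (lt_irrefl 0), if_pos ⟨rfl, by omega, by omega⟩]
    simp only [decide_eq_decide]
    omega
  have hA : ∀ b : ℤ, sigmaCfg (-1,0) (segmentY (0,0) (0,1) (2*n+1)) etaAlt
      (((-1:ℤ), b) : Pt) = true := by
    intro b
    rw [sigma_eval n]
    norm_num
  have hB : ∀ b : ℤ, sigmaCfg (-1,0) (segmentY (0,0) (0,1) (2*n+1)) etaAlt
      (((1:ℤ), b) : Pt) = false := by
    intro b
    rw [sigma_eval n]
    norm_num
  have hmid : ∀ b : ℤ, sigmaCfg (-1,0) (segmentY (0,0) (0,1) (2*n+1)) etaAlt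
      (((0:ℤ), b) : Pt)
      = if 0 ≤ b ∧ b ≤ 2*n then decide (b % 2 = 0) else true := by
    intro b
    rw [sigma_eval n, if_neg (lt_irrefl 0)]
    by_cases h : 0 ≤ b ∧ b ≤ 2*(n:ℤ)
    · rw [if_pos ⟨rfl, h.1, h.2⟩, if_pos h]
    · rw [if_neg (fun hc => h ⟨hc.2.1, hc.2.2⟩), if_neg h]
  rw [Finset.card_filter]
  show (∑ X ∈ insert ({(-1, 1), (-1, -1)} : Finset Pt)
      (insert ({(0, 1), (1, 1)} : Finset Pt) {({(0, -1), (1, -1)} : Finset Pt)}), _) = _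
  rw [Finset.sum_insert (by decide), Finset.sum_insert (by decide), Finset.sum_singleton]
  simp only [Finset.mem_insert, Finset.mem_singleton, forall_eq_or_imp, forall_eq,
    Prod.mk_add_mk, zero_add, hσv, hA, hB, hmid]
  by_cases hpar : j % 2 = 0
  · have h1 : ¬ ((j:ℤ) + 1) % 2 = 0 := by omega
    have h2 : ¬ ((j:ℤ) + -1) % 2 = 0 := by omega
    by_cases hlt : j < 2*n
    · have hc1 : 0 ≤ (j:ℤ) + 1 ∧ (j:ℤ) + 1 ≤ 2*n := by constructor <;> omega
      by_cases h0 : 0 < j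
      · have hc2 : 0 ≤ (j:ℤ) + -1 ∧ (j:ℤ) + -1 ≤ 2*n := by constructor <;> omega
        simp [hpar, hlt, h0, hc1, hc2, h1, h2]
      · have hc2 : ¬ (0 ≤ (j:ℤ) + -1 ∧ (j:ℤ) + -1 ≤ 2*n) := by omega
        simp [hpar, hlt, h0, hc1, hc2, h1]
        omega
    · have hc1 : ¬ (0 ≤ (j:ℤ) + 1 ∧ (j:ℤ) + 1 ≤ 2*n) := by omega
      by_cases h0 : 0 < j
      · have hc2 : 0 ≤ (j:ℤ) + -1 ∧ (j:ℤ) + -1 ≤ 2*n := by constructor <;> omega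
        simp [hpar, hlt, h0, hc1, hc2, h2]
        omega
      · have hc2 : ¬ (0 ≤ (j:ℤ) + -1 ∧ (j:ℤ) + -1 ≤ 2*n) := by omega
        simp [hpar, hlt, h0, hc1, hc2]
        omega
  · simp [hpar]

private lemma sum_eq (n : ℕ) (b : Bool) (g : Pt → ℕ) :
    ∑ u ∈ (segmentY (0,0) (0,1) (2*n+1)).filter (fun v => etaAlt v = b), g u
      = ∑ j ∈ Finset.range (2*n+1),
          if etaAlt (((0:ℤ),(j:ℤ)) : Pt) = b then g (((0:ℤ),(j:ℤ)) : Pt) else 0 := by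
  rw [Finset.sum_filter, segY_eq,
    Finset.sum_image (fun x _ y _ h => by simpa using h)]

private lemma oddCount (n : ℕ) :
    (∑ j ∈ Finset.range (2*n+1), if j % 2 = 0 then 0 else 1) = n := by
  induction n with
  | zero => simp
  | succ k ih =>
    rw [show 2*(k+1)+1 = (2*k+1)+1+1 by ring, Finset.sum_range_succ, Finset.sum_range_succ, ih]
    have h1 : (2*k+1) % 2 = 1 := by omega
    have h2 : (2*k+1+1) % 2 = 0 := by omega
    simp [h1, h2]

private lemma evenCount (n : ℕ) :
    (∑ j ∈ Finset.range (2*n), if j % 2 = 0 then (1:ℕ) else 0) = n := by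
  induction n with
  | zero => simp
  | succ k ih =>
    rw [show 2*(k+1) = (2*k)+1+1 by ring, Finset.sum_range_succ, Finset.sum_range_succ, ih]
    have h1 : (2*k) % 2 = 0 := by omega
    have h2 : (2*k+1) % 2 = 1 := by omega
    simp [h1, h2]

private lemma evenShift (n : ℕ) :
    (∑ i ∈ Finset.range (2*n), if (i+1) % 2 = 0 then (1:ℕ) else 0) = n := by
  induction n with
  | zero => simp
  | succ k ih =>
    rw [show 2*(k+1) = (2*k)+1+1 by ring, Finset.sum_range_succ, Finset.sum_range_succ, ih]
    have h1 : (2*k+1) % 2 = 1 := by omega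
    have h2 : (2*k+1+1) % 2 = 0 := by omega
    simp [h1, h2]

private lemma stmt16_false (n : ℕ) :
    (∑ u ∈ (segmentY (0,0) (0,1) (2*n+1)).filter (fun v => etaAlt v = false),
      rval Utri (-1,0) (segmentY (0,0) (0,1) (2*n+1)) etaAlt u) = n := by
  rw [sum_eq]
  rw [Finset.sum_congr rfl (fun j hj => ?_), oddCount n]
  rw [Finset.mem_range] at hj
  rw [rval_val n j (by omega)]
  by_cases hpar : j % 2 = 0
  · have : ((j:ℤ) % 2 = 0) := by omega
    simp [etaAlt, hpar, this]
  · have : ¬ ((j:ℤ) % 2 = 0) := by omega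
    simp [etaAlt, hpar, this]

private lemma stmt16_true (n : ℕ) :
    (∑ v ∈ (segmentY (0,0) (0,1) (2*n+1)).filter (fun v => etaAlt v = true),
      rval Utri (-1,0) (segmentY (0,0) (0,1) (2*n+1)) etaAlt v) = 2*n := by
  rw [sum_eq]
  have key : ∀ j ∈ Finset.range (2*n+1),
      (if etaAlt (((0:ℤ),(j:ℤ)) : Pt) = true
        then rval Utri (-1,0) (segmentY (0,0) (0,1) (2*n+1)) etaAlt (((0:ℤ),(j:ℤ)) : Pt)
        else 0)
      = (if j % 2 = 0 ∧ 0 < j then 1 else 0) + (if j % 2 = 0 ∧ j < 2*n then 1 else 0) := by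
    intro j hj
    rw [Finset.mem_range] at hj
    rw [rval_val n j (by omega)]
    by_cases hpar : j % 2 = 0
    · have h1 : ((j:ℤ) % 2 = 0) := by omega
      by_cases h0 : 0 < j <;> by_cases hlt : j < 2*n <;>
        simp [etaAlt, hpar, h1, h0, hlt]
    · have h1 : ¬ ((j:ℤ) % 2 = 0) := by omega
      simp [etaAlt, hpar, h1]
  rw [Finset.sum_congr rfl key, Finset.sum_add_distrib]
  have hfst : (∑ j ∈ Finset.range (2*n+1), if j % 2 = 0 ∧ 0 < j then 1 else 0) = n := by
    rw [Finset.sum_range_succ']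
    simp only [Nat.lt_irrefl, and_false, if_false, add_zero]
    rw [Finset.sum_congr rfl (fun i _ => ?_), evenShift n]
    simp [Nat.succ_pos]
  have hsnd : (∑ j ∈ Finset.range (2*n+1), if j % 2 = 0 ∧ j < 2*n then 1 else 0) = n := by
    rw [Finset.sum_range_succ]
    simp only [Nat.lt_irrefl, and_false, if_false, add_zero]
    rw [Finset.sum_congr rfl (fun i hi => ?_), evenCount n]
    rw [Finset.mem_range] at hi
    simp [hi]
  rw [hfst, hsnd]
  ring

end Stmt16Aux

/-- for 𝒰_▷ and y = −e₁, the alternating configuration on the segment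
Y = {(0,j) : 0 ≤ j ≤ 2n} with η⁺ = {(0,2k) : 0 ≤ k ≤ n} has Σ_{u∈η⁻} r_u(η) = n and
Σ_{v∈η⁺} r_v(η) = 2n; in particular the fairness inequality fails. -/
theorem stmt16 (n : ℕ) (hn : 1 ≤ n) :
    let y : ℝ × ℝ := (-1, 0)
    let Y : Finset Pt := segmentY (0, 0) (0, 1) (2 * n + 1)
    let η : Pt → Bool := fun x => decide (x.2 % 2 = 0)
    (∑ u ∈ Y.filter (fun v => η v = false), rval Utri y Y η u) = n ∧
    (∑ v ∈ Y.filter (fun v => η v = true), rval Utri y Y η v) = 2 * n ∧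
    ¬ ((∑ v ∈ Y.filter (fun v => η v = true), rval Utri y Y η v) ≤
        ∑ u ∈ Y.filter (fun v => η v = false), rval Utri y Y η u) := by
  intro y Y η
  refine ⟨stmt16_false n, stmt16_true n, fun hle => ?_⟩
  have e1 : (∑ u ∈ Y.filter (fun v => η v = false), rval Utri y Y η u) = n := stmt16_false n
  have e2 : (∑ v ∈ Y.filter (fun v => η v = true), rval Utri y Y η v) = 2*n := stmt16_true n
  rw [e1, e2] at hle
  omega
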